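/- For every integer s ≥ 2, every u ∈ Z_{2^s}, and every integer p with 0 ≤ p ≤ s−1, one has φ(u) + φ(2^p) = φ(u + 2^p − 2^{p+1} u_p), where [u_0,…,u_{s−1}]_2 is the binary expansion of u. -/

import Mathlib

/-- The `i`-th digit of the binary expansion of `u : ZMod (2^s)`. -/
def gdigit (s : ℕ) (u : ZMod (2^s)) (i : ℕ) : ZMod 2 :=
  if (ZMod.val u).testBit i then 1 else 0

/-- Carlet's generalized Gray map `φ : ZMod (2^s) → (Z_2^{s-1} → Z_2)`:
the coordinate indexed by `y ∈ Z_2^{s-1}` is `u_{s-1} + ∑ u_i y_i`. -/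
def gray (s : ℕ) (u : ZMod (2^s)) : (Fin (s - 1) → ZMod 2) → ZMod 2 :=
  fun y => gdigit s u (s - 1) + ∑ i : Fin (s - 1), gdigit s u (i : ℕ) * y i

lemma add_pow_eq_xor {n p : ℕ} (h : n.testBit p = false) : n + 2^p = n ^^^ 2^p := by
  have hq : n = 2^(p+1) * (n / 2^(p+1)) + n % 2^(p+1) := (Nat.div_add_mod n _).symm
  set q := n / 2^(p+1) with hqd
  set r := n % 2^(p+1) with hrd
  have hr2 : r < 2^(p+1) := Nat.mod_lt _ (Nat.two_pow_pos _)
  have hrp : r.testBit p = false := by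
    have h2 := Nat.testBit_mod_two_pow n (p+1) p
    rw [← hrd] at h2
    simpa [Nat.lt_succ_self, h] using h2
  have hrlt : r < 2^p := by
    by_contra h'
    push_neg at h'
    have h1 : r / 2^p = 1 := by
      apply Nat.div_eq_of_lt_le
      · simpa using h'
      · have h3 : 2^(p+1) = 2 * 2^p := by ring
        omega
    simp [Nat.testBit, Nat.shiftRight_eq_div_pow, h1] at hrp
  apply Nat.eq_of_testBit_eq
  intro j
  have hsum : n + 2^p = 2^(p+1) * q + (2^p * 1 + r) := by omega
  rw [hsum, Nat.testBit_xor, Nat.testBit_two_pow]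
  have hlt' : 2^p * 1 + r < 2^(p+1) := by
    have h3 : 2^(p+1) = 2 * 2^p := by ring
    omega
  rw [Nat.testBit_two_pow_mul_add q hlt' j]
  rw [Nat.testBit_two_pow_mul_add 1 hrlt j]
  conv_rhs => rw [hq]
  rw [Nat.testBit_two_pow_mul_add q hr2 j]
  rcases Nat.lt_trichotomy j p with hj|hj|hj
  · simp [hj, Nat.lt_succ_of_lt hj, Nat.ne_of_gt hj]
  · subst hj
    simp [Nat.lt_succ_self, hrp]
  · have h1 : ¬ j < p := by omega
    have h2 : ¬ j < p + 1 := by omega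
    simp [h1, h2, Nat.ne_of_lt hj]

lemma sub_pow_eq_xor {n p : ℕ} (h : n.testBit p = true) : n - 2^p = n ^^^ 2^p := by
  have hge : 2^p ≤ n := Nat.ge_two_pow_of_testBit h
  have hq : n = 2^(p+1) * (n / 2^(p+1)) + n % 2^(p+1) := (Nat.div_add_mod n _).symm
  set q := n / 2^(p+1) with hqd
  set r := n % 2^(p+1) with hrd
  have hr2 : r < 2^(p+1) := Nat.mod_lt _ (Nat.two_pow_pos _)
  have hrp : r.testBit p = true := by
    have h2 := Nat.testBit_mod_two_pow n (p+1) p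
    rw [← hrd] at h2
    simpa [Nat.lt_succ_self, h] using h2
  have hrge : 2^p ≤ r := Nat.ge_two_pow_of_testBit hrp
  have hmp : (n - 2^p).testBit p = false := by
    have hsub : n - 2^p = 2^(p+1) * q + (r - 2^p) := by omega
    have hlt : r - 2^p < 2^(p+1) := by omega
    rw [hsub, Nat.testBit_two_pow_mul_add q hlt p]
    have hlt2 : r - 2^p < 2^p := by
      have h3 : 2^(p+1) = 2 * 2^p := by ring
      omega
    simp [Nat.lt_succ_self, Nat.testBit_lt_two_pow hlt2]
  have := add_pow_eq_xor hmp
  have h4 : n - 2^p + 2^p = n := by omega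
  rw [h4] at this
  conv_rhs => rw [this]
  exact (Nat.xor_xor_cancel_right _ _).symm

lemma ite_xor_zmod2 (a b : Bool) :
    (if (a ^^ b) then (1 : ZMod 2) else 0) = (if a then 1 else 0) + (if b then 1 else 0) := by
  cases a <;> cases b <;> decide

theorem gray_add_two_pow (s : ℕ) (hs : 2 ≤ s) (u : ZMod (2^s)) (p : ℕ) (hp : p ≤ s - 1) :
    gray s u + gray s (2 ^ p) =
      gray s (u + 2 ^ p - 2 ^ (p + 1) * (if (ZMod.val u).testBit p then 1 else 0)) := by
  haveI : NeZero (2^s) := ⟨(Nat.two_pow_pos s).ne'⟩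
  have hps : p < s := by omega
  set n := ZMod.val u with hn
  have hnlt : n < 2^s := ZMod.val_lt u
  have hplt : 2^p < 2^s := Nat.pow_lt_pow_right one_lt_two hps
  set m := n ^^^ 2^p with hm
  have hmlt : m < 2^s := Nat.xor_lt_two_pow hnlt hplt
  have hu : ((n : ℕ) : ZMod (2^s)) = u := ZMod.natCast_zmod_val u
  have hv : (u + 2 ^ p - 2 ^ (p + 1) * (if n.testBit p then 1 else 0) : ZMod (2^s))
      = ((m : ℕ) : ZMod (2^s)) := by
    rcases hb : n.testBit p with _ | _
    · rw [hm, ← add_pow_eq_xor hb]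
      simp only [Bool.false_eq_true, if_false, mul_zero, sub_zero]
      push_cast
      rw [hu]
    · rw [hm, ← sub_pow_eq_xor hb]
      have hge : 2^p ≤ n := Nat.ge_two_pow_of_testBit hb
      rw [Nat.cast_sub hge]
      simp only [if_true, mul_one]
      push_cast
      rw [hu]
      ring
  rw [hv]
  have hvval : (((m : ℕ) : ZMod (2^s))).val = m := ZMod.val_cast_of_lt hmlt
  have hpval : ((2 ^ p : ZMod (2^s))).val = 2^p := by
    have : ((2^p : ℕ) : ZMod (2^s)) = (2^p : ZMod (2^s)) := by push_cast; ring
    rw [← this]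
    exact ZMod.val_cast_of_lt hplt
  have hdig : ∀ j, gdigit s ((m : ℕ) : ZMod (2^s)) j
      = gdigit s u j + gdigit s (2^p) j := by
    intro j
    unfold gdigit
    rw [hvval, hpval, hm, Nat.testBit_xor, Nat.testBit_two_pow, ite_xor_zmod2, ← hn]
  funext y
  simp only [Pi.add_apply, gray, hdig, add_mul, Finset.sum_add_distrib]
  ring
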